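/- arXiv:2005.10624 — 2 statements merged into one kernel-verified Lean document; each statement's English description precedes it below -/
import Mathlib

section
/- Let X ∈ ℝ^{t×d} with rows x₁,...,x_t, let θ ∈ ℝ^d, and suppose the rewards are r = Xθ + η with η ∼ N(0, I_t). Let Z = XᵀX be invertible with λ_min(Z) ≥ R², and fix x ∈ ℝ^d with ‖x‖₂ ≤ R. Define w = X Z^{-1} x and let ξ ∼ N(0, 1-‖w‖₂²) be independent of η. Then rᵀw + ξ has distribution N(θᵀx, 1). -/
open MeasureTheory ProbabilityTheory Real Matrix
open scoped NNReal ENNReal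

lemma gaussianPDFReal_conv {v₁ v₂ : ℝ≥0} (h₁ : v₁ ≠ 0) (h₂ : v₂ ≠ 0) (s y : ℝ) :
    gaussianPDFReal 0 v₁ (s - y) * gaussianPDFReal 0 v₂ y
      = gaussianPDFReal 0 (v₁ + v₂) s *
        gaussianPDFReal ((v₂ : ℝ) * s / ((v₁ : ℝ) + v₂)) (v₁ * v₂ / (v₁ + v₂)) y := by
  have ha : (0:ℝ) < v₁ := lt_of_le_of_ne (v₁.coe_nonneg) (by exact_mod_cast (Ne.symm h₁))
  have hb : (0:ℝ) < v₂ := lt_of_le_of_ne (v₂.coe_nonneg) (by exact_mod_cast (Ne.symm h₂))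
  have hab : (0:ℝ) < (v₁:ℝ) + v₂ := by linarith
  have hc : ((v₁ * v₂ / (v₁ + v₂) : ℝ≥0) : ℝ) = (v₁:ℝ) * v₂ / ((v₁:ℝ) + v₂) := by push_cast; ring
  have hπ : (0:ℝ) < π := Real.pi_pos
  simp only [gaussianPDFReal, NNReal.coe_add, hc, sub_zero]
  rw [mul_mul_mul_comm, ← Real.exp_add, mul_mul_mul_comm (√(2 * π * ((v₁:ℝ) + v₂)))⁻¹, ← Real.exp_add]
  congr 1
  · rw [← mul_inv, ← mul_inv]
    rw [← Real.sqrt_mul (by positivity), ← Real.sqrt_mul (by positivity)]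
    congr 1
    field_simp
  · congr 1
    field_simp
    ring

lemma gaussianReal_prod_eq {v₁ v₂ : ℝ≥0} (h₁ : v₁ ≠ 0) (h₂ : v₂ ≠ 0) :
    (gaussianReal 0 v₁).prod (gaussianReal 0 v₂)
      = ((volume : Measure ℝ).prod volume).withDensity
          (fun p => gaussianPDF 0 v₁ p.1 * gaussianPDF 0 v₂ p.2) := by
  refine Measure.prod_eq fun s t hs ht => ?_
  rw [withDensity_apply _ (hs.prod ht), ← Measure.prod_restrict,
    lintegral_prod_mul (measurable_gaussianPDF 0 v₁).aemeasurable
      (measurable_gaussianPDF 0 v₂).aemeasurable,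
    gaussianReal_of_var_ne_zero 0 h₁, gaussianReal_of_var_ne_zero 0 h₂,
    withDensity_apply _ hs, withDensity_apply _ ht]

lemma gaussianReal_conv (v₁ v₂ : ℝ≥0) :
    Measure.map (fun p : ℝ × ℝ => p.1 + p.2) ((gaussianReal 0 v₁).prod (gaussianReal 0 v₂))
      = gaussianReal 0 (v₁ + v₂) := by
  rcases eq_or_ne v₁ 0 with h₁ | h₁
  · rw [h₁, gaussianReal_zero_var, Measure.dirac_prod, Measure.map_map
      (g := fun p : ℝ × ℝ => p.1 + p.2) (measurable_fst.add measurable_snd) measurable_prodMk_left]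
    have : ((fun p : ℝ × ℝ => p.1 + p.2) ∘ Prod.mk (0:ℝ)) = id := by funext a; simp
    rw [this, Measure.map_id]; simp
  rcases eq_or_ne v₂ 0 with h₂ | h₂
  · rw [h₂, gaussianReal_zero_var, Measure.prod_dirac, Measure.map_map
      (g := fun p : ℝ × ℝ => p.1 + p.2) (measurable_fst.add measurable_snd) measurable_prodMk_right]
    have : ((fun p : ℝ × ℝ => p.1 + p.2) ∘ fun x : ℝ => (x, (0:ℝ))) = id := by funext a; simp
    rw [this, Measure.map_id]; simp
  have h12 : v₁ + v₂ ≠ 0 := by simp [h₁, h₂]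
  have hcne : v₁ * v₂ / (v₁ + v₂) ≠ 0 := by
    simp [div_eq_zero_iff, h₁, h₂, h12]
  have hGmeas : Measurable fun q : ℝ × ℝ => gaussianPDF 0 v₁ (q.1 - q.2) * gaussianPDF 0 v₂ q.2 :=
    ((measurable_gaussianPDF 0 v₁).comp (measurable_fst.sub measurable_snd)).mul
      ((measurable_gaussianPDF 0 v₂).comp measurable_snd)
  rw [gaussianReal_prod_eq h₁ h₂, gaussianReal_of_var_ne_zero 0 h12]
  refine Measure.ext fun s hs => ?_
  have hadds : MeasurableSet ((fun p : ℝ × ℝ => p.1 + p.2) ⁻¹' s) :=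
    (measurable_fst.add measurable_snd) hs
  rw [Measure.map_apply (f := fun p : ℝ × ℝ => p.1 + p.2) (measurable_fst.add measurable_snd) hs,
    withDensity_apply _ hadds, withDensity_apply _ hs]
  have hT : MeasurePreserving (fun p : ℝ × ℝ => (p.1 + p.2, p.2))
      ((volume : Measure ℝ).prod volume) ((volume : Measure ℝ).prod volume) :=
    measurePreserving_add_prod volume volume
  have hinner : ∀ x : ℝ, ∫⁻ y, gaussianPDF 0 v₁ (x - y) * gaussianPDF 0 v₂ y ∂volume
      = gaussianPDF 0 (v₁ + v₂) x := by
    intro x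
    calc ∫⁻ y, gaussianPDF 0 v₁ (x - y) * gaussianPDF 0 v₂ y ∂volume
        = ∫⁻ y, ENNReal.ofReal (gaussianPDFReal 0 (v₁ + v₂) x *
            gaussianPDFReal ((v₂:ℝ) * x / ((v₁:ℝ) + v₂)) (v₁ * v₂ / (v₁ + v₂)) y) ∂volume := by
          refine lintegral_congr fun y => ?_
          rw [gaussianPDF, gaussianPDF, ← ENNReal.ofReal_mul (gaussianPDFReal_nonneg _ _ _),
            gaussianPDFReal_conv h₁ h₂ x y]
      _ = ENNReal.ofReal (∫ y, gaussianPDFReal 0 (v₁ + v₂) x *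
            gaussianPDFReal ((v₂:ℝ) * x / ((v₁:ℝ) + v₂)) (v₁ * v₂ / (v₁ + v₂)) y) :=
          (ofReal_integral_eq_lintegral_ofReal
            ((integrable_gaussianPDFReal _ _).const_mul _)
            (ae_of_all _ fun y => mul_nonneg (gaussianPDFReal_nonneg _ _ _)
              (gaussianPDFReal_nonneg _ _ _))).symm
      _ = gaussianPDF 0 (v₁ + v₂) x := by
          rw [integral_const_mul, integral_gaussianPDFReal_eq_one _ hcne, mul_one]
          rfl
  calc ∫⁻ p in (fun p : ℝ × ℝ => p.1 + p.2) ⁻¹' s,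
        gaussianPDF 0 v₁ p.1 * gaussianPDF 0 v₂ p.2 ∂((volume : Measure ℝ).prod volume)
      = ∫⁻ p, ((Prod.fst ⁻¹' s).indicator
          (fun q : ℝ × ℝ => gaussianPDF 0 v₁ (q.1 - q.2) * gaussianPDF 0 v₂ q.2))
          ((p.1 + p.2, p.2)) ∂((volume : Measure ℝ).prod volume) := by
        rw [← lintegral_indicator hadds]
        refine lintegral_congr fun p => ?_
        by_cases hp : p.1 + p.2 ∈ s
        · simp [Set.indicator_of_mem, hp, Set.mem_preimage]
        · simp [Set.indicator_of_notMem, hp, Set.mem_preimage]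
    _ = ∫⁻ q, (Prod.fst ⁻¹' s).indicator
          (fun q : ℝ × ℝ => gaussianPDF 0 v₁ (q.1 - q.2) * gaussianPDF 0 v₂ q.2) q
          ∂((volume : Measure ℝ).prod volume) :=
        hT.lintegral_comp (hGmeas.indicator (measurable_fst hs))
    _ = ∫⁻ q in Prod.fst ⁻¹' s, gaussianPDF 0 v₁ (q.1 - q.2) * gaussianPDF 0 v₂ q.2
          ∂((volume : Measure ℝ).prod volume) := lintegral_indicator (measurable_fst hs) _
    _ = ∫⁻ x in s, ∫⁻ y, gaussianPDF 0 v₁ (x - y) * gaussianPDF 0 v₂ y ∂volume ∂volume := by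
        rw [← Set.prod_univ, ← Measure.prod_restrict, lintegral_prod _ hGmeas.aemeasurable,
          Measure.restrict_univ]
    _ = ∫⁻ x in s, gaussianPDF 0 (v₁ + v₂) x ∂volume := lintegral_congr fun x => hinner x


lemma IndepFun.gaussianReal_add' {Ω : Type*} [MeasurableSpace Ω] {μ : Measure Ω}
    [IsProbabilityMeasure μ] {Xf Yf : Ω → ℝ} (hX : Measurable Xf) (hY : Measurable Yf)
    (h : IndepFun Xf Yf μ) {v₁ v₂ : ℝ≥0} (hmX : Measure.map Xf μ = gaussianReal 0 v₁)
    (hmY : Measure.map Yf μ = gaussianReal 0 v₂) :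
    Measure.map (fun ω => Xf ω + Yf ω) μ = gaussianReal 0 (v₁ + v₂) := by
  have hpair : Measure.map (fun ω => (Xf ω, Yf ω)) μ = (Measure.map Xf μ).prod (Measure.map Yf μ) :=
    (indepFun_iff_map_prod_eq_prod_map_map hX.aemeasurable hY.aemeasurable).mp h
  have hcomp : (fun ω => Xf ω + Yf ω)
      = (fun p : ℝ × ℝ => p.1 + p.2) ∘ (fun ω => (Xf ω, Yf ω)) := rfl
  rw [hcomp, ← Measure.map_map (g := fun p : ℝ × ℝ => p.1 + p.2) (measurable_fst.add measurable_snd) (hX.prodMk hY), hpair,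
    hmX, hmY, gaussianReal_conv]

lemma gaussian_finset_sum {Ω : Type*} [MeasurableSpace Ω] {μ : Measure Ω}
    [IsProbabilityMeasure μ] {ι : Type*} {f : ι → Ω → ℝ} {v : ι → ℝ≥0}
    (hindep : iIndepFun f μ) (hmeas : ∀ i, Measurable (f i))
    (hg : ∀ i, Measure.map (f i) μ = gaussianReal 0 (v i)) (s : Finset ι) :
    Measure.map (fun ω => ∑ i ∈ s, f i ω) μ = gaussianReal 0 (∑ i ∈ s, v i) := by
  classical
  induction s using Finset.cons_induction with
  | empty =>
      simp only [Finset.sum_empty]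
      rw [Measure.map_const, measure_univ, one_smul, gaussianReal_zero_var]
  | cons a s ha ih =>
      have hsum : Measurable (fun ω => ∑ i ∈ s, f i ω) :=
        Finset.measurable_sum _ fun i _ => hmeas i
      have hindep2 : IndepFun (fun ω => ∑ i ∈ s, f i ω) (f a) μ := by
        have h := hindep.indepFun_finsetSum_of_notMem hmeas ha
        have hfe : (∑ j ∈ s, f j) = fun ω => ∑ j ∈ s, f j ω := by
          funext ω; simp
        rwa [hfe] at h
      have h := IndepFun.gaussianReal_add' hsum (hmeas a) hindep2 ih (hg a)
      simp only [Finset.sum_cons]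
      have hfun : (fun ω => f a ω + ∑ i ∈ s, f i ω)
          = fun ω => (∑ i ∈ s, f i ω) + f a ω := funext fun ω => add_comm _ _
      rw [hfun, add_comm (v a), h]

lemma gaussian_add_const'' {Ω : Type*} [MeasurableSpace Ω] {μ : Measure Ω} {Y : Ω → ℝ}
    (hY : Measurable Y) {m : ℝ} {v : ℝ≥0} (h : Measure.map Y μ = gaussianReal m v) (c : ℝ) :
    Measure.map (fun ω => Y ω + c) μ = gaussianReal (m + c) v := by
  have h1 : (fun ω => Y ω + c) = (fun z : ℝ => z + c) ∘ Y := rfl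
  rw [h1, ← Measure.map_map (measurable_add_const c) hY, h, gaussianReal_map_add_const]

lemma gaussian_const_mul'' {Ω : Type*} [MeasurableSpace Ω] {μ : Measure Ω} {Y : Ω → ℝ}
    (hY : Measurable Y) {m : ℝ} {v : ℝ≥0} (h : Measure.map Y μ = gaussianReal m v) (c : ℝ) :
    Measure.map (fun ω => c * Y ω) μ = gaussianReal (c * m) (NNReal.mk (c ^ 2) (sq_nonneg _) * v) := by
  have h1 : (fun ω => c * Y ω) = (fun z : ℝ => c * z) ∘ Y := rfl
  rw [h1, ← Measure.map_map (measurable_const_mul c) hY, h, gaussianReal_map_const_mul]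

theorem stmt_17 {Ω : Type*} [MeasurableSpace Ω] (μ : Measure Ω) [IsProbabilityMeasure μ]
    (t d : ℕ) (X : Matrix (Fin t) (Fin d) ℝ) (θ : Fin d → ℝ) (R : ℝ) (hR : 0 < R)
    (hZinv : IsUnit (Xᵀ * X).det)
    (hmin : ∀ y : Fin d → ℝ, R ^ 2 * (∑ i, y i ^ 2) ≤ y ⬝ᵥ (Xᵀ * X) *ᵥ y)
    (x : Fin d → ℝ) (hx : Real.sqrt (∑ i, x i ^ 2) ≤ R)
    -- the weight vector w = X Z⁻¹ x
    (w : Fin t → ℝ) (hw : w = X *ᵥ ((Xᵀ * X)⁻¹ *ᵥ x))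
    -- reward noise: iid standard Gaussian
    (η : Fin t → Ω → ℝ) (hmeasη : ∀ i, Measurable (η i))
    (hindepη : iIndepFun η μ)
    (hgaussη : ∀ i, Measure.map (η i) μ = gaussianReal 0 1)
    -- compensating noise ξ ~ N(0, 1 - ‖w‖²), independent of η
    (ξ : Ω → ℝ) (hmeasξ : Measurable ξ)
    (hgaussξ : Measure.map ξ μ = gaussianReal 0 (Real.toNNReal (1 - ∑ j, w j ^ 2)))
    (hindepξ : IndepFun (fun ω => (fun j => η j ω)) ξ μ)
    -- rewards r = Xθ + η
    (r : Fin t → Ω → ℝ) (hr : ∀ j ω, r j ω = (X *ᵥ θ) j + η j ω) :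
    Measure.map (fun ω => (∑ j, r j ω * w j) + ξ ω) μ = gaussianReal (θ ⬝ᵥ x) 1 := by
  have hZy : (Xᵀ * X) *ᵥ ((Xᵀ * X)⁻¹ *ᵥ x) = x := by
    rw [mulVec_mulVec, Matrix.mul_nonsing_inv _ hZinv, one_mulVec]
  have hdot : ∀ u : Fin t → ℝ, ∀ z : Fin d → ℝ, (X *ᵥ z) ⬝ᵥ u = z ⬝ᵥ (Xᵀ *ᵥ u) := by
    intro u z
    rw [mulVec_transpose, dotProduct_comm z, ← dotProduct_mulVec, dotProduct_comm]
  have hXtw : Xᵀ *ᵥ w = x := by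
    rw [hw, mulVec_mulVec]
    exact hZy
  have hmean : (X *ᵥ θ) ⬝ᵥ w = θ ⬝ᵥ x := by rw [hdot, hXtw]
  have hvarx : ∑ j, w j ^ 2 = ((Xᵀ * X)⁻¹ *ᵥ x) ⬝ᵥ x := by
    have h0 : ∑ j, w j ^ 2 = w ⬝ᵥ w := by simp [dotProduct, sq]
    rw [h0]
    conv_lhs => rw [hw]
    rw [hdot, mulVec_mulVec, hZy]
  have hsumw_nonneg : (0:ℝ) ≤ ∑ j, w j ^ 2 := Finset.sum_nonneg fun j _ => sq_nonneg _
  have hle1 : ∑ j, w j ^ 2 ≤ 1 := by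
    set y : Fin d → ℝ := (Xᵀ * X)⁻¹ *ᵥ x with hy
    have hCS : (y ⬝ᵥ x) ^ 2 ≤ (∑ i, y i ^ 2) * ∑ i, x i ^ 2 :=
      Finset.sum_mul_sq_le_sq_mul_sq _ _ _
    have hx2 : ∑ i, x i ^ 2 ≤ R ^ 2 := by
      have h1 : ∑ i, x i ^ 2 = (Real.sqrt (∑ i, x i ^ 2)) ^ 2 :=
        (Real.sq_sqrt (Finset.sum_nonneg fun i _ => sq_nonneg _)).symm
      rw [h1]
      exact pow_le_pow_left₀ (Real.sqrt_nonneg _) hx 2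
    have hmin' : R ^ 2 * (∑ i, y i ^ 2) ≤ y ⬝ᵥ x := by
      have h2 := hmin y
      rwa [hy, hZy] at h2
    have hy2 : (0:ℝ) ≤ ∑ i, y i ^ 2 := Finset.sum_nonneg fun i _ => sq_nonneg _
    rw [hvarx] at hsumw_nonneg ⊢
    nlinarith [mul_le_mul_of_nonneg_left hx2 hy2, sq_nonneg (y ⬝ᵥ x)]
  -- gaussian sum
  have hfmeas : ∀ i : Fin t, Measurable (fun ω => w i * η i ω) :=
    fun i => (hmeasη i).const_mul (w i)
  have hfindep : iIndepFun (fun i (ω : Ω) => w i * η i ω) μ :=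
    hindepη.comp (fun i => fun z : ℝ => w i * z) (fun i => measurable_const_mul (w i))
  have hfgauss : ∀ i : Fin t, Measure.map (fun ω => w i * η i ω) μ
      = gaussianReal 0 (⟨w i ^ 2, sq_nonneg _⟩ : ℝ≥0) := by
    intro i
    have h1 := gaussian_const_mul'' (hmeasη i) (hgaussη i) (w i)
    rwa [mul_zero, mul_one] at h1
  have hS : Measure.map (fun ω => ∑ i, w i * η i ω) μ
      = gaussianReal 0 (∑ i, (⟨w i ^ 2, sq_nonneg _⟩ : ℝ≥0)) :=
    gaussian_finset_sum hfindep hfmeas hfgauss Finset.univ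
  have hSmeas : Measurable fun ω => ∑ i, w i * η i ω :=
    Finset.measurable_sum _ fun i _ => hfmeas i
  have hSξ : IndepFun (fun ω => ∑ i, w i * η i ω) ξ μ := by
    have h2 := hindepξ.comp (φ := fun u : Fin t → ℝ => ∑ j, w j * u j) (ψ := id)
      (by fun_prop) measurable_id
    exact h2
  have hVar : (∑ i, (⟨w i ^ 2, sq_nonneg _⟩ : ℝ≥0) : ℝ≥0) + Real.toNNReal (1 - ∑ j, w j ^ 2) = 1 := by
    refine NNReal.coe_injective ?_
    push_cast
    rw [Real.coe_toNNReal _ (by linarith)]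
    have hs : ((∑ i, (⟨w i ^ 2, sq_nonneg _⟩ : ℝ≥0) : ℝ≥0) : ℝ) = ∑ i, w i ^ 2 :=
      (NNReal.coe_sum _ _).trans (Finset.sum_congr rfl fun i _ => rfl)
    linarith [hs]
  have hSum : Measure.map (fun ω => (∑ i, w i * η i ω) + ξ ω) μ = gaussianReal 0 1 := by
    have h3 := IndepFun.gaussianReal_add' hSmeas hmeasξ hSξ hS hgaussξ
    rwa [hVar] at h3
  have hfun : (fun ω => (∑ j, r j ω * w j) + ξ ω)
      = fun ω => ((∑ i, w i * η i ω) + ξ ω) + ((X *ᵥ θ) ⬝ᵥ w) := by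
    funext ω
    have hsplit : ∑ j, r j ω * w j = ((X *ᵥ θ) ⬝ᵥ w) + ∑ j, w j * η j ω := by
      simp only [hr, add_mul, Finset.sum_add_distrib]
      congr 1
      exact Finset.sum_congr rfl fun j _ => mul_comm _ _
    rw [hsplit]; ring
  rw [hfun, hmean]
  have h4 := gaussian_add_const'' (hSmeas.add hmeasξ) hSum (θ ⬝ᵥ x)
  rwa [zero_add] at h4
end

section
/- Let X = Σ_{i=1}^n G_i be a sum of n independent geometric random variables with success probability p ∈ (0,1) (each G_i ≥ 1 counts trials until first success). Then for any c ≥ 1, P(X ≥ c·E[X]) ≤ exp(-n(c - 1 - log c)). -/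
set_option maxHeartbeats 1000000


open MeasureTheory ProbabilityTheory Real

theorem stmt_19 {Ω : Type*} [MeasurableSpace Ω] (μ : Measure Ω) [IsProbabilityMeasure μ]
    (n : ℕ) (hn : 0 < n) (p : ℝ) (hp0 : 0 < p) (hp1 : p < 1)
    (G : Fin n → Ω → ℕ) (hmeas : ∀ i, Measurable (G i))
    (hindep : iIndepFun G μ)
    -- each G_i is geometric on {1, 2, ...}: P(G_i = k) = (1-p)^(k-1) p for k ≥ 1
    (hgeom : ∀ i (k : ℕ), 1 ≤ k →
      μ {ω | G i ω = k} = ENNReal.ofReal ((1 - p) ^ (k - 1) * p))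
    (hpos : ∀ i, μ {ω | G i ω = 0} = 0)
    (c : ℝ) (hc : 1 ≤ c) :
    μ {ω | c * ((n : ℝ) / p) ≤ ∑ i, (G i ω : ℝ)}
      ≤ ENNReal.ofReal (Real.exp (-(n : ℝ) * (c - 1 - Real.log c))) := by
  have hc0 : (0:ℝ) < c := lt_of_lt_of_le one_pos hc
  set q : ℝ := 1 - p with hq
  have hq0 : 0 ≤ q := by simp [hq]; linarith
  set s : ℝ := p * (c - 1) / c with hs
  have hs0 : 0 ≤ s := by
    apply div_nonneg _ hc0.le
    nlinarith
  have hsp : s < p := by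
    rw [hs, div_lt_iff₀ hc0]
    nlinarith
  have hs1 : s < 1 := hsp.trans hp1
  have h1s : (0:ℝ) < 1 - s := by linarith
  set r : ℝ := q * exp s with hr
  have hr0 : (0:ℝ) ≤ r := mul_nonneg hq0 (exp_pos s).le
  have hes : exp s * (1 - s) ≤ 1 := by
    have h1 : 1 - s ≤ exp (-s) := by
      have := Real.add_one_le_exp (-s); linarith
    calc exp s * (1 - s) ≤ exp s * exp (-s) :=
          mul_le_mul_of_nonneg_left h1 (exp_pos s).le
      _ = 1 := by rw [← Real.exp_add]; simp
  have hr1 : r < 1 := by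
    have h1 : q < exp (-s) := by
      have := Real.add_one_le_exp (-s)
      have : 1 - s ≤ exp (-s) := by linarith
      have hqs : q < 1 - s := by simp only [hq]; linarith
      linarith
    have h2 : q * exp s < exp (-s) * exp s :=
      mul_lt_mul_of_pos_right h1 (exp_pos s)
    rw [← Real.exp_add] at h2
    simpa using h2
  have h1r : (0:ℝ) < 1 - r := by linarith
  set X : Fin n → Ω → ℝ := fun i ω => (G i ω : ℝ) with hX
  have hXmeas : ∀ i, Measurable (X i) :=
    fun i => (measurable_of_countable (fun k : ℕ => (k : ℝ))).comp (hmeas i)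
  have hXindep : iIndepFun X μ :=
    hindep.comp (fun _ => fun k : ℕ => (k : ℝ)) (fun _ => measurable_of_countable _)
  have hfm : Measurable (fun k : ℕ => exp (s * (k:ℝ))) := measurable_of_countable _
  -- measure of singletons under the pushforward
  have hν : ∀ i (k : ℕ), (μ.map (G i)) {k} = μ {ω | G i ω = k} := by
    intro i k
    rw [Measure.map_apply (hmeas i) (measurableSet_singleton k)]
    congr 1
  have hν0 : ∀ i, (μ.map (G i)) {(0:ℕ)} = 0 := fun i => by rw [hν]; exact hpos i
  have hνk : ∀ i (k : ℕ), (μ.map (G i)) {(k+1:ℕ)} = ENNReal.ofReal (q ^ k * p) := by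
    intro i k
    rw [hν, hgeom i (k+1) (Nat.le_add_left 1 k)]
    simp [hq]
  have htermR : ∀ k : ℕ, (q ^ k * p) * exp (s * (((k+1:ℕ)):ℝ)) = (p * exp s) * r ^ k := by
    intro k
    rw [hr, mul_pow, ← Real.exp_nat_mul]
    push_cast
    rw [show s * ((k:ℝ) + 1) = (k:ℝ) * s + s from by ring, Real.exp_add]
    ring
  have hgeo_sum : Summable (fun k : ℕ => (p * exp s) * r ^ k) :=
    (summable_geometric_of_lt_one hr0 hr1).mul_left _
  -- integrability of exp (s * X i)
  have hint : ∀ i, Integrable (fun ω => exp (s * X i ω)) μ := by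
    intro i
    have h1 : Integrable (fun k : ℕ => exp (s * (k:ℝ))) (μ.map (G i)) := by
      refine ⟨hfm.aestronglyMeasurable, ?_⟩
      rw [hasFiniteIntegral_def, lintegral_countable']
      have heq : (∑' k : ℕ, ‖exp (s * (k:ℝ))‖ₑ * (μ.map (G i)) {k})
          = ENNReal.ofReal (∑' k : ℕ, (p * exp s) * r ^ k) := by
        rw [tsum_eq_zero_add' ENNReal.summable, hν0 i, mul_zero, zero_add]
        rw [ENNReal.ofReal_tsum_of_nonneg
          (fun k => mul_nonneg (mul_nonneg hp0.le (exp_pos s).le) (pow_nonneg hr0 k)) hgeo_sum]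
        refine tsum_congr fun k => ?_
        rw [hνk i k, Real.enorm_eq_ofReal (exp_pos _).le,
          ← ENNReal.ofReal_mul (exp_pos _).le, ← htermR k]
        ring_nf
      rw [heq]
      exact ENNReal.ofReal_lt_top
    have := (integrable_map_measure hfm.aestronglyMeasurable
      (hmeas i).aemeasurable).mp h1
    exact this
  -- value of the mgf
  have hwsum : ∀ i, Summable (fun k : ℕ =>
      ((μ.map (G i)) {k}).toReal * exp (s * (k:ℝ))) := by
    intro i
    rw [← summable_nat_add_iff 1]
    refine hgeo_sum.congr fun k => ?_
    rw [hνk i k, ENNReal.toReal_ofReal (mul_nonneg (pow_nonneg hq0 k) hp0.le)]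
    exact (htermR k).symm
  have hmgf : ∀ i, mgf (X i) μ s = (p * exp s) * (1 - r)⁻¹ := by
    intro i
    have h1 : Integrable (fun k : ℕ => exp (s * (k:ℝ))) (μ.map (G i)) := by
      refine (integrable_map_measure hfm.aestronglyMeasurable
        (hmeas i).aemeasurable).mpr ?_
      exact hint i
    have h2 : mgf (X i) μ s = ∫ k, exp (s * (k:ℝ)) ∂(μ.map (G i)) := by
      rw [mgf, ← integral_map (hmeas i).aemeasurable hfm.aestronglyMeasurable]
    rw [h2, integral_countable' h1]
    simp only [smul_eq_mul, Measure.real]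
    rw [Summable.tsum_eq_zero_add (hwsum i), hν0 i]
    simp only [ENNReal.toReal_zero, zero_mul, zero_add]
    have h3 : (∑' k : ℕ, ((μ.map (G i)) {(k+1:ℕ)}).toReal * exp (s * (((k+1:ℕ)):ℝ)))
        = ∑' k : ℕ, (p * exp s) * r ^ k := by
      refine tsum_congr fun k => ?_
      rw [hνk i k, ENNReal.toReal_ofReal (mul_nonneg (pow_nonneg hq0 k) hp0.le)]
      exact htermR k
    rw [h3, tsum_mul_left, tsum_geometric_of_lt_one hr0 hr1]
  -- mgf bound
  have hmgf_le : ∀ i, mgf (X i) μ s ≤ c := by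
    intro i
    rw [hmgf i, ← div_eq_mul_inv, div_le_iff₀ h1r]
    have hcs : c * s = p * (c - 1) := by
      rw [hs]; field_simp
    have hces : exp s * (c * s) = exp s * (p * (c - 1)) := by rw [hcs]
    have h4 : c * (exp s * (1 - s)) ≤ c * 1 :=
      mul_le_mul_of_nonneg_left hes hc0.le
    simp only [hr, hq]
    nlinarith [exp_pos s]
  -- Chernoff bound
  have hintsum : Integrable (fun ω => exp (s * (∑ i, X i) ω)) μ :=
    hXindep.integrable_exp_mul_sum hXmeas (fun i _ => hint i)
  have hchern := measure_ge_le_exp_mul_mgf (μ := μ) (X := ∑ i, X i)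
    (c * ((n:ℝ) / p)) hs0 hintsum
  rw [hXindep.mgf_sum hXmeas] at hchern
  have hprod : (∏ i, mgf (X i) μ s) ≤ c ^ n := by
    calc (∏ i, mgf (X i) μ s) ≤ ∏ _i : Fin n, c :=
          Finset.prod_le_prod (fun i _ => mgf_nonneg) (fun i _ => hmgf_le i)
      _ = c ^ n := by simp
  have hsetq : {ω | c * ((n : ℝ) / p) ≤ ∑ i, (G i ω : ℝ)}
      = {ω | c * ((n : ℝ) / p) ≤ (∑ i, X i) ω} := by
    ext ω; simp [hX]
  have hfinal : exp (-s * (c * ((n:ℝ) / p))) * c ^ n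
      = exp (-(n : ℝ) * (c - 1 - Real.log c)) := by
    have hcn : c ^ n = exp ((n:ℝ) * Real.log c) := by
      rw [Real.exp_nat_mul, Real.exp_log hc0]
    rw [hcn, ← Real.exp_add]
    congr 1
    have hse : s * (c * ((n:ℝ) / p)) = (c - 1) * n := by
      rw [hs]; field_simp
    rw [neg_mul, hse]; ring
  calc μ {ω | c * ((n : ℝ) / p) ≤ ∑ i, (G i ω : ℝ)}
      = ENNReal.ofReal ((μ {ω | c * ((n : ℝ) / p) ≤ (∑ i, X i) ω}).toReal) := by
        rw [hsetq, ENNReal.ofReal_toReal (measure_ne_top μ _)]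
    _ ≤ ENNReal.ofReal (Real.exp (-(n : ℝ) * (c - 1 - Real.log c))) := by
        apply ENNReal.ofReal_le_ofReal
        refine hchern.trans ?_
        rw [← hfinal]
        exact mul_le_mul_of_nonneg_left hprod (exp_pos _).le
end
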